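/- arXiv:1602.00639 — 5 statements merged into one kernel-verified Lean document; each statement's English description precedes it below -/
import Mathlib

section
/- Let r, b > 0 and let the switch time t_j have density p'(t) = (r/b)·e^{(r/b)·t}/(e-1) on [0, b/r] (and zero elsewhere). For any depletion time u with 0 ≤ u < b/r, the expected algorithm cost ∫₀^u (r·t + b)·p'(t) dt + ∫_u^{b/r} r·u·p'(t) dt equals (e/(e-1))·r·u. -/
open Real MeasureTheory intervalIntegral

/-- Density of the ROA switch time on `[0, b/r]`. -/
noncomputable def roaDensity (r b t : ℝ) : ℝ :=
  (r / b) * exp ((r / b) * t) / (exp 1 - 1)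

lemma exp_int (c a v : ℝ) (hc : c ≠ 0) :
    ∫ t in a..v, exp (c * t) = (1 / c) * (exp (c * v) - exp (c * a)) := by
  have h : ∀ t ∈ Set.uIcc a v, HasDerivAt (fun t => (1 / c) * exp (c * t)) (exp (c * t)) t := by
    intro t _
    have := ((hasDerivAt_id t).const_mul c).exp.const_mul (1 / c)
    simpa [mul_comm, mul_assoc, hc] using this
  rw [intervalIntegral.integral_eq_sub_of_hasDerivAt h (by apply Continuous.intervalIntegrable; continuity)]
  ring

lemma first_int (r b u : ℝ) (hr : 0 < r) (hb : 0 < b) :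
    ∫ t in (0:ℝ)..u, (r * t + b) * ((r / b) * exp ((r / b) * t)) =
      r * u * exp ((r / b) * u) := by
  have h : ∀ t ∈ Set.uIcc (0:ℝ) u, HasDerivAt (fun t => r * t * exp ((r / b) * t))
      ((r * t + b) * ((r / b) * exp ((r / b) * t))) t := by
    intro t _
    have h1 : HasDerivAt (fun t : ℝ => r * t) r t := by
      simpa using (hasDerivAt_id t).const_mul r
    have h2 : HasDerivAt (fun t : ℝ => exp ((r / b) * t)) ((r / b) * exp ((r / b) * t)) t := by
      simpa [mul_comm] using ((hasDerivAt_id t).const_mul (r / b)).exp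
    have := h1.mul h2
    refine HasDerivAt.congr_deriv this ?_
    field_simp
    ring
  rw [intervalIntegral.integral_eq_sub_of_hasDerivAt h (by apply Continuous.intervalIntegrable; continuity)]
  simp

theorem stmt_5 (r b u : ℝ) (hr : 0 < r) (hb : 0 < b) (hu0 : 0 ≤ u) (hu : u < b / r) :
    (∫ t in (0:ℝ)..u, (r * t + b) * roaDensity r b t) +
      (∫ t in u..(b / r), r * u * roaDensity r b t) =
    (exp 1 / (exp 1 - 1)) * (r * u) := by
  have he : exp 1 - 1 ≠ 0 := by
    have := Real.exp_one_gt_d9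
    linarith
  have hc : r / b ≠ 0 := by positivity
  have key2 : ∫ t in u..(b / r), exp ((r / b) * t) =
      (b / r) * (exp 1 - exp ((r / b) * u)) := by
    rw [exp_int (r / b) u (b / r) hc]
    have : (r / b) * (b / r) = 1 := by field_simp
    rw [this]
    field_simp
  have e1 : (∫ t in (0:ℝ)..u, (r * t + b) * roaDensity r b t) =
      (r * u * exp ((r / b) * u)) / (exp 1 - 1) := by
    simp only [roaDensity]
    simp_rw [show ∀ t : ℝ, (r * t + b) * ((r / b) * exp ((r / b) * t) / (exp 1 - 1)) =
        ((r * t + b) * ((r / b) * exp ((r / b) * t))) * (exp 1 - 1)⁻¹ from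
      fun t => by ring]
    rw [intervalIntegral.integral_mul_const, first_int r b u hr hb]
    field_simp
  have e2 : (∫ t in u..(b / r), r * u * roaDensity r b t) =
      (r * u * (exp 1 - exp ((r / b) * u))) / (exp 1 - 1) := by
    simp only [roaDensity]
    simp_rw [show ∀ t : ℝ, r * u * ((r / b) * exp ((r / b) * t) / (exp 1 - 1)) =
        exp ((r / b) * t) * (r * u * (r / b) / (exp 1 - 1)) from fun t => by ring]
    rw [intervalIntegral.integral_mul_const, key2]
    field_simp
  rw [e1, e2]
  field_simp
  ring
end

section
/- Let r, b > 0 and T ≥ b/r. With switch time t_j distributed with CDF p_off(t) = (e^{(r/b)t} - 1)/(e-1) on [0, b/r], for every u ∈ (0, T] the expected cost of the randomized algorithm equals (e/(e-1))·min(r·u, b); hence the randomized online algorithm achieves (expected) competitive ratio e/(e-1). -/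
open Real MeasureTheory intervalIntegral

/-- Expected cost of the randomized algorithm when the depletion time is `u`:
the algorithm pays `r*u` if `u < t_j` and `r*t_j + b` if `u ≥ t_j`,
where `t_j` is drawn from the ROA density on `[0, b/r]`. -/
noncomputable def roaExpCost (r b u : ℝ) : ℝ :=
  ∫ t in (0:ℝ)..(b / r), (if u < t then r * u else r * t + b) * roaDensity r b t

lemma e_sub_one_pos : (0:ℝ) < Real.exp 1 - 1 := by
  have h : (1:ℝ) < Real.exp 1 := by
    have := Real.add_one_lt_exp (by norm_num : (1:ℝ) ≠ 0)
    linarith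
  linarith

lemma contDensity (r b : ℝ) : Continuous (roaDensity r b) := by
  unfold roaDensity
  fun_prop

lemma intA (r b : ℝ) (hr : 0 < r) (hb : 0 < b) (x y : ℝ) :
    ∫ t in x..y, (r * t + b) * roaDensity r b t
      = (r * y * Real.exp (r / b * y) - r * x * Real.exp (r / b * x)) / (Real.exp 1 - 1) := by
  have hE := e_sub_one_pos
  have key : ∀ z : ℝ, HasDerivAt (fun t => r * t * Real.exp (r / b * t) / (Real.exp 1 - 1))
      ((r * z + b) * roaDensity r b z) z := by
    intro z
    have h1 : HasDerivAt (fun t : ℝ => r * t * Real.exp (r / b * t))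
        (r * Real.exp (r / b * z) + (r * z) * (Real.exp (r / b * z) * (r / b))) z := by
      have ha : HasDerivAt (fun t : ℝ => r * t) r z := by
        simpa using (hasDerivAt_id z).const_mul r
      have hb' : HasDerivAt (fun t : ℝ => Real.exp (r / b * t))
          (Real.exp (r / b * z) * (r / b)) z := by
        have : HasDerivAt (fun t : ℝ => r / b * t) (r / b) z := by
          simpa using (hasDerivAt_id z).const_mul (r / b)
        simpa using this.exp
      simpa [mul_comm, mul_assoc, Pi.mul_def] using ha.mul hb'
    have := h1.div_const (Real.exp 1 - 1)
    refine this.congr_deriv ?_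
    unfold roaDensity
    field_simp
    ring
  rw [intervalIntegral.integral_eq_sub_of_hasDerivAt (fun z _ => key z)]
  · ring
  · apply Continuous.intervalIntegrable
    exact (continuous_const.mul continuous_id |>.add continuous_const).mul (contDensity r b)

lemma intB (r b K : ℝ) (hr : 0 < r) (hb : 0 < b) (x y : ℝ) :
    ∫ t in x..y, K * roaDensity r b t
      = K * (Real.exp (r / b * y) - Real.exp (r / b * x)) / (Real.exp 1 - 1) := by
  have hE := e_sub_one_pos
  have key : ∀ z : ℝ, HasDerivAt (fun t => K * Real.exp (r / b * t) / (Real.exp 1 - 1))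
      (K * roaDensity r b z) z := by
    intro z
    have h1 : HasDerivAt (fun t : ℝ => K * Real.exp (r / b * t))
        (K * (Real.exp (r / b * z) * (r / b))) z := by
      have : HasDerivAt (fun t : ℝ => r / b * t) (r / b) z := by
        simpa using (hasDerivAt_id z).const_mul (r / b)
      simpa using (this.exp).const_mul K
    have := h1.div_const (Real.exp 1 - 1)
    refine this.congr_deriv ?_
    unfold roaDensity
    ring
  rw [intervalIntegral.integral_eq_sub_of_hasDerivAt (fun z _ => key z)]
  · ring
  · exact (continuous_const.mul (contDensity r b)).intervalIntegrable _ _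

theorem stmt_7 (r b T : ℝ) (hr : 0 < r) (hb : 0 < b) (hT : b / r ≤ T) :
    ∀ u : ℝ, 0 < u → u ≤ T →
      roaExpCost r b u = (exp 1 / (exp 1 - 1)) * min (r * u) b := by
  intro u hu huT
  have hE := e_sub_one_pos
  have hexp1 : r / b * (b / r) = 1 := by field_simp
  rcases le_or_gt (b / r) u with hcase | hcase
  · -- u ≥ b/r : the algorithm always switches; min = b
    have hmin : min (r * u) b = b := by
      have : b ≤ r * u := by
        have := mul_le_mul_of_nonneg_left hcase hr.le
        rwa [mul_div_cancel₀ _ hr.ne'] at this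
      simp [min_eq_right this]
    have hcongr : ∀ t ∈ Set.uIcc (0:ℝ) (b / r),
        (if u < t then r * u else r * t + b) * roaDensity r b t
          = (r * t + b) * roaDensity r b t := by
      intro t ht
      rw [Set.uIcc_of_le (by positivity)] at ht
      have : ¬ u < t := not_lt.mpr (ht.2.trans hcase)
      simp [this]
    rw [roaExpCost, intervalIntegral.integral_congr hcongr, intA r b hr hb,
      hexp1, hmin]
    rw [mul_div_cancel₀ _ hr.ne']
    field_simp
    ring
  · -- u < b/r : split at u; min = r*u
    have hru : r * u < b := by
      have := mul_lt_mul_of_pos_left hcase hr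
      rwa [mul_div_cancel₀ _ hr.ne'] at this
    have hmin : min (r * u) b = r * u := min_eq_left hru.le
    set f : ℝ → ℝ := fun t => (if u < t then r * u else r * t + b) * roaDensity r b t with hf
    have hc1 : IntervalIntegrable (fun t => (r * t + b) * roaDensity r b t) volume 0 u :=
      (Continuous.mul (by continuity) (contDensity r b)).intervalIntegrable 0 u
    have hi1 : IntervalIntegrable f volume 0 u := by
      apply hc1.congr
      intro t ht
      rw [Set.uIoc_of_le hu.le] at ht
      simp [hf, not_lt.mpr ht.2]
    have hc2 : IntervalIntegrable (fun t => (r * u) * roaDensity r b t) volume u (b / r) :=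
      (continuous_const.mul (contDensity r b)).intervalIntegrable u (b / r)
    have hi2 : IntervalIntegrable f volume u (b / r) := by
      apply hc2.congr
      intro t ht
      rw [Set.uIoc_of_le hcase.le] at ht
      simp [hf, ht.1]
    have hsplit : roaExpCost r b u = (∫ t in (0:ℝ)..u, f t) + ∫ t in u..(b / r), f t :=
      (intervalIntegral.integral_add_adjacent_intervals hi1 hi2).symm
    have h1 : (∫ t in (0:ℝ)..u, f t) = ∫ t in (0:ℝ)..u, (r * t + b) * roaDensity r b t := by
      apply intervalIntegral.integral_congr
      intro t ht
      rw [Set.uIcc_of_le hu.le] at ht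
      simp [hf, not_lt.mpr ht.2]
    have h2 : (∫ t in u..(b / r), f t) = ∫ t in u..(b / r), (r * u) * roaDensity r b t := by
      apply intervalIntegral.integral_congr_ae
      apply (ae_restrict_iff' measurableSet_uIoc).mp
      apply (ae_restrict_iff' measurableSet_uIoc).mpr
      filter_upwards with t ht
      rw [Set.uIoc_of_le hcase.le] at ht
      simp [hf, ht.1]
    rw [hsplit, h1, h2, intA r b hr hb, intB r b (r * u) hr hb, hexp1, hmin]
    field_simp
    ring
end

section
/- Let (r_v) be a strictly decreasing finite positive sequence r_1 > r_2 > ... > r_n > 0, let 0 = t_0 < t_1 < ... < t_{n-1} be change times, and b > 0. Define for each v ≥ 1 the threshold t̄_v = b/r_v - (1/r_v)·Σ_{v'=1}^{v-1} t_{v'}·(r_{v'} - r_{v'+1}). If t̄_{v-1} > t_{v-1} (the old threshold has not yet been reached), then t̄_v > t̄_{v-1}, i.e., the updated OFF time strictly increases. -/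
/-- The threshold (OFF time) of the online algorithm at phase `v`:
`t̄_v = b/r_v - (1/r_v) Σ_{v'=1}^{v-1} t_{v'} (r_{v'} - r_{v'+1})`. -/
noncomputable def offThreshold (r t : ℕ → ℝ) (b : ℝ) (v : ℕ) : ℝ :=
  b / r v - (1 / r v) * ∑ v' ∈ Finset.Icc 1 (v - 1), t v' * (r v' - r (v' + 1))

theorem stmt_10 (n : ℕ) (r t : ℕ → ℝ) (b : ℝ) (hb : 0 < b)
    (hrpos : ∀ i, 1 ≤ i → i ≤ n → 0 < r i)
    (hrdec : ∀ i, 1 ≤ i → i < n → r (i + 1) < r i)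
    (ht0 : t 0 = 0)
    (htinc : ∀ i, i + 1 ≤ n - 1 → t i < t (i + 1))
    (v : ℕ) (hv2 : 2 ≤ v) (hvn : v ≤ n)
    (hold : t (v - 1) < offThreshold r t b (v - 1)) :
    offThreshold r t b (v - 1) < offThreshold r t b v := by
  obtain ⟨w, rfl⟩ : ∃ w, v = w + 2 := ⟨v - 2, by omega⟩
  have h1 : w + 2 - 1 = w + 1 := rfl
  have h2 : w + 1 - 1 = w := rfl
  have hr1 : 0 < r (w + 1) := hrpos _ (by omega) (by omega)
  have hr2 : 0 < r (w + 2) := hrpos _ (by omega) (by omega)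
  have hdec : r (w + 2) < r (w + 1) := hrdec _ (by omega) (by omega)
  have hsum : ∑ v' ∈ Finset.Icc 1 (w + 1), t v' * (r v' - r (v' + 1)) =
      (∑ v' ∈ Finset.Icc 1 w, t v' * (r v' - r (v' + 1)))
        + t (w + 1) * (r (w + 1) - r (w + 2)) := by
    rw [Finset.sum_Icc_succ_top (by omega : 1 ≤ w + 1)]
  unfold offThreshold
  unfold offThreshold at hold
  simp only [show w + 2 - 1 = w + 1 from rfl, show w + 1 - 1 = w from rfl] at hold ⊢
  set S := ∑ v' ∈ Finset.Icc 1 w, t v' * (r v' - r (v' + 1)) with hS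
  rw [hsum]
  have key : ∀ (x c : ℝ), 0 < c → b / c - 1 / c * x = (b - x) / c := by
    intro x c hc; field_simp
  rw [key S _ hr1] at hold
  rw [lt_div_iff₀ hr1] at hold
  rw [key S _ hr1, key _ _ hr2, div_lt_div_iff₀ hr1 hr2]
  nlinarith [mul_pos (sub_pos.2 hdec) (sub_pos.2 hold)]
end

section
/- Consider the online algorithm with decreasing piecewise-constant rental cost r(t) (values r_1 > ... > r_n) and buy cost b, which buys at the threshold time t̄ defined so the accumulated rental cost at t̄ equals b. If the depletion time u satisfies u ≥ t̄, then the algorithm's total cost equals (accumulated rental cost up to t̄) + b = 2b, while the offline optimal cost is b; hence the ratio is 2. If t_{v-1} ≤ u < t̄, the algorithm's cost equals the offline optimal cost (accumulated rental up to u). Therefore the algorithm is 2-competitive. -/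
open MeasureTheory intervalIntegral

/-- The piecewise-constant rental rate: at time `τ` its value is `r v` where
`v - 1` is the number of change times `t 1, ..., t (n-1)` that have already occurred,
i.e. `r τ = r v` on `[t (v-1), t v)`. -/
noncomputable def stepRate (n : ℕ) (r t : ℕ → ℝ) (τ : ℝ) : ℝ :=
  r (1 + ((Finset.Ico 1 n).filter (fun i => t i ≤ τ)).card)

/-- Accumulated rental cost up to time `s`: `∫₀^s r(τ) dτ`. -/
noncomputable def accRent (n : ℕ) (r t : ℕ → ℝ) (s : ℝ) : ℝ :=
  ∫ τ in (0:ℝ)..s, stepRate n r t τ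

/-- Cost of the online algorithm that buys at the threshold time `tbar`. -/
noncomputable def algCost (n : ℕ) (r t : ℕ → ℝ) (b tbar u : ℝ) : ℝ :=
  if u < tbar then accRent n r t u else accRent n r t tbar + b

lemma stepRate_index_mem (n : ℕ) (hn : 1 ≤ n) (t : ℕ → ℝ) (τ : ℝ) :
    1 + ((Finset.Ico 1 n).filter (fun i => t i ≤ τ)).card ∈ Finset.Icc 1 n := by
  have hcard : ((Finset.Ico 1 n).filter (fun i => t i ≤ τ)).card ≤ n - 1 := by
    have := Finset.card_filter_le (Finset.Ico 1 n) (fun i => t i ≤ τ)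
    simpa [Nat.card_Ico] using this
  simp only [Finset.mem_Icc]
  omega

lemma stepRate_pos (n : ℕ) (hn : 1 ≤ n) (r t : ℕ → ℝ)
    (hrpos : ∀ i, 1 ≤ i → i ≤ n → 0 < r i) (τ : ℝ) :
    0 < stepRate n r t τ := by
  have h := stepRate_index_mem n hn t τ
  simp only [Finset.mem_Icc] at h
  exact hrpos _ h.1 h.2

lemma stepRate_measurable (n : ℕ) (r t : ℕ → ℝ) :
    Measurable (stepRate n r t) := by
  have hf : Monotone (fun τ : ℝ => ((Finset.Ico 1 n).filter (fun i => t i ≤ τ)).card) := by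
    intro a b hab
    apply Finset.card_le_card
    apply Finset.monotone_filter_right
    intro i _ hi
    exact le_trans hi hab
  exact (measurable_from_top (f := fun k : ℕ => r (1 + k))).comp hf.measurable

lemma stepRate_intervalIntegrable (n : ℕ) (hn : 1 ≤ n) (r t : ℕ → ℝ) (a c : ℝ) :
    IntervalIntegrable (stepRate n r t) volume a c := by
  rw [intervalIntegrable_iff]
  have hC : ∀ τ, |stepRate n r t τ| ≤ ∑ i ∈ Finset.Icc 1 n, |r i| := by
    intro τ
    have hmem := stepRate_index_mem n hn t τ
    exact Finset.single_le_sum (f := fun i => |r i|) (fun i _ => abs_nonneg _) hmem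
  apply Integrable.mono' (g := fun _ : ℝ => ∑ i ∈ Finset.Icc 1 n, |r i|)
  · exact integrableOn_const measure_Ioc_lt_top.ne
  · exact ((stepRate_measurable n r t).aestronglyMeasurable).restrict
  · exact Filter.Eventually.of_forall hC

lemma accRent_mono (n : ℕ) (hn : 1 ≤ n) (r t : ℕ → ℝ)
    (hrpos : ∀ i, 1 ≤ i → i ≤ n → 0 < r i) {a c : ℝ} (hac : a ≤ c) :
    accRent n r t a ≤ accRent n r t c := by
  have h1 : accRent n r t c = accRent n r t a + ∫ τ in a..c, stepRate n r t τ := by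
    unfold accRent
    rw [integral_add_adjacent_intervals (stepRate_intervalIntegrable n hn r t 0 a)
      (stepRate_intervalIntegrable n hn r t a c)]
  have h2 : 0 ≤ ∫ τ in a..c, stepRate n r t τ :=
    intervalIntegral.integral_nonneg hac
      (fun τ _ => (stepRate_pos n hn r t hrpos τ).le)
  linarith

theorem stmt_12 (n : ℕ) (hn : 1 ≤ n) (r t : ℕ → ℝ) (b : ℝ) (hb : 0 < b)
    (hrpos : ∀ i, 1 ≤ i → i ≤ n → 0 < r i)
    (hrdec : ∀ i, 1 ≤ i → i < n → r (i + 1) < r i)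
    (ht0 : t 0 = 0)
    (htinc : ∀ i, i + 1 ≤ n - 1 → t i < t (i + 1))
    (tbar : ℝ) (htbar0 : 0 ≤ tbar)
    (hbal : accRent n r t tbar = b) :
    (∀ u : ℝ, tbar ≤ u →
        algCost n r t b tbar u = 2 * b ∧ min (accRent n r t u) b = b) ∧
    (∀ u : ℝ, 0 ≤ u → u < tbar →
        algCost n r t b tbar u = min (accRent n r t u) b) ∧
    (∀ u : ℝ, 0 ≤ u → algCost n r t b tbar u ≤ 2 * min (accRent n r t u) b) := by
  have hzero : accRent n r t 0 = 0 := by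
    unfold accRent; simp
  have part1 : ∀ u : ℝ, tbar ≤ u →
      algCost n r t b tbar u = 2 * b ∧ min (accRent n r t u) b = b := by
    intro u hu
    have hge : b ≤ accRent n r t u := by
      rw [← hbal]; exact accRent_mono n hn r t hrpos hu
    constructor
    · unfold algCost
      rw [if_neg (not_lt.2 hu), hbal]; ring
    · exact min_eq_right hge
  have part2 : ∀ u : ℝ, 0 ≤ u → u < tbar →
      algCost n r t b tbar u = min (accRent n r t u) b := by
    intro u hu0 hu
    have hle : accRent n r t u ≤ b := by
      rw [← hbal]; exact accRent_mono n hn r t hrpos hu.le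
    unfold algCost
    rw [if_pos hu, min_eq_left hle]
  refine ⟨part1, part2, ?_⟩
  intro u hu0
  rcases lt_or_ge u tbar with h | h
  · rw [part2 u hu0 h]
    have hnn : 0 ≤ min (accRent n r t u) b := by
      have : 0 ≤ accRent n r t u := by
        rw [← hzero]; exact accRent_mono n hn r t hrpos hu0
      exact le_min this hb.le
    linarith
  · obtain ⟨h1, h2⟩ := part1 u h
    rw [h1, h2]
end

section
/- Let r, b > 0, κ ≥ 1, and suppose p: [0, b/r] → ℝ is differentiable, satisfies r·κ = r·p(t) - b·p'(t) for all t ∈ [0, b/r], p(0) = 1, and p(b/r) = 0. Then necessarily κ = e/(e-1) and p(t) = (e - e^{(r/b)t})/(e-1). -/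
open Real

theorem stmt_14 (r b κ : ℝ) (hr : 0 < r) (hb : 0 < b) (hκ : 1 ≤ κ)
    (p p' : ℝ → ℝ)
    (hderiv : ∀ t ∈ Set.Icc (0 : ℝ) (b / r), HasDerivAt p (p' t) t)
    (hode : ∀ t ∈ Set.Icc (0 : ℝ) (b / r), r * κ = r * p t - b * p' t)
    (h0 : p 0 = 1) (h1 : p (b / r) = 0) :
    κ = exp 1 / (exp 1 - 1) ∧
    ∀ t ∈ Set.Icc (0 : ℝ) (b / r),
      p t = (exp 1 - exp ((r / b) * t)) / (exp 1 - 1) := by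
  have hbne : b ≠ 0 := hb.ne'
  have hrne : r ≠ 0 := hr.ne'
  set c : ℝ := r / b with hc
  set g : ℝ → ℝ := fun t => (p t - κ) * exp (-(c * t)) with hg
  have hgderiv : ∀ t ∈ Set.Icc (0 : ℝ) (b / r), HasDerivAt g 0 t := by
    intro t ht
    have hp' : p' t = c * (p t - κ) := by
      have := hode t ht
      rw [hc, div_mul_eq_mul_div, eq_div_iff hbne]
      linarith
    have h1 : HasDerivAt (fun t : ℝ => exp (-(c * t))) (exp (-(c * t)) * (-c)) t := by
      have : HasDerivAt (fun t : ℝ => -(c * t)) (-c) t := by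
        have h := ((hasDerivAt_id t).const_mul c).neg
        simp only [id_eq, mul_one] at h
        exact h
      exact this.exp
    have := (((hderiv t ht).sub_const κ).mul h1)
    exact this.congr_deriv (by rw [hp']; ring)
  have hconst : ∀ x ∈ Set.Icc (0 : ℝ) (b / r), g x = g 0 := by
    apply constant_of_has_deriv_right_zero
    · exact fun x hx => ((hgderiv x hx).continuousAt).continuousWithinAt
    · intro x hx
      exact ((hgderiv x (Set.mem_Icc_of_Ico hx)).hasDerivWithinAt)
  have hbr : (0 : ℝ) ≤ b / r := le_of_lt (div_pos hb hr)
  have hcbr : c * (b / r) = 1 := by rw [hc]; field_simp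
  have hg0 : g 0 = 1 - κ := by simp [hg, h0]
  have hgend : g (b / r) = -κ * exp (-1) := by
    simp [hg, h1, hcbr]
  have hkey : -κ * exp (-1) = 1 - κ := by
    rw [← hgend, ← hg0]
    exact hconst (b / r) (Set.mem_Icc.2 ⟨hbr, le_refl _⟩)
  have hexp1 : exp (-1 : ℝ) = 1 / exp 1 := by
    rw [exp_neg]; ring
  have he1 : (1 : ℝ) < exp 1 := by
    have := exp_one_gt_d9; linarith
  have hene : exp 1 - 1 ≠ 0 := by linarith
  have hκval : κ = exp 1 / (exp 1 - 1) := by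
    have hepos : exp (1:ℝ) ≠ 0 := (exp_pos 1).ne'
    rw [hexp1] at hkey
    field_simp at hkey ⊢
    linarith
  refine ⟨hκval, ?_⟩
  intro t ht
  have := hconst t ht
  rw [hg0] at this
  have hexppos : exp (-(c * t)) ≠ 0 := (exp_pos _).ne'
  have : p t - κ = (1 - κ) * exp (c * t) := by
    have h := this
    simp only [hg] at h
    rw [exp_neg] at h
    field_simp at h
    linarith [h]
  rw [hκval] at this
  have : p t = exp 1 / (exp 1 - 1) + (1 - exp 1 / (exp 1 - 1)) * exp (c * t) := by
    linarith
  rw [this, hc]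
  field_simp
  ring
end
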